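/- For each fixed d ≥ 1, the generating function Σ_λ t^{dif_d(λ)} x^{Γ(λ)}, summed over all nonempty integer partitions, equals x / (1 − x − tx(1 − x^d) − x^{d+1}). -/

import Mathlib

/-- A partition: a nonempty weakly decreasing list of positive integers. -/
def IsPartition (l : List ℕ) : Prop :=
  l ≠ [] ∧ l.Pairwise (· ≥ ·) ∧ ∀ x ∈ l, 0 < x

/-- The perimeter of a partition: largest part plus number of parts minus 1. -/
def perim (l : List ℕ) : ℕ := l.headI + l.length - 1

/-- Number of repeated parts: indices i with λ_i = λ_{i+1}. -/
def repStat (l : List ℕ) : ℕ :=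
  ((List.range (l.length - 1)).filter fun i => l.getD i 0 = l.getD (i + 1) 0).length

/-- Number of even parts. -/
def evenStat (l : List ℕ) : ℕ := l.countP fun x => x % 2 = 0

/-- dif_d(λ): number of indices i with λ_i − λ_{i+1} < d. -/
def difStat (d : ℕ) (l : List ℕ) : ℕ :=
  ((List.range (l.length - 1)).filter fun i => l.getD i 0 - l.getD (i + 1) 0 < d).length

/-- mod′_d(λ): number of parts not congruent to 1 mod d+1. -/
def modStat (d : ℕ) (l : List ℕ) : ℕ := l.countP fun x => ¬ x % (d + 1) = 1

section Aux

lemma difStat_nil (d : ℕ) : difStat d [] = 0 := rfl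

lemma difStat_singleton (d a : ℕ) : difStat d [a] = 0 := rfl

lemma difStat_cons (d a : ℕ) (l : List ℕ) (hl : l ≠ []) :
    difStat d (a :: l) = (if a - l.headI < d then 1 else 0) + difStat d l := by
  obtain ⟨b, t, rfl⟩ := List.exists_cons_of_ne_nil hl
  unfold difStat
  simp only [List.length_cons, Nat.add_sub_cancel]
  rw [List.range_succ_eq_map, List.filter_cons, List.filter_map]
  simp only [List.length_map, List.headI, List.getD_cons_zero, List.getD_cons_succ]
  by_cases h : a - b < d <;> simp [h, Function.comp_def] <;> omega

/-- Finset of partitions with perimeter n. -/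
def Pf : ℕ → Finset (List ℕ)
  | 0 => ∅
  | 1 => {[1]}
  | (n+2) => ((Pf (n+1)).image fun l => (l.headI + 1) :: l.tail) ∪
             ((Pf (n+1)).image fun l => l.headI :: l)

lemma perim_pos {l : List ℕ} (h : IsPartition l) : 1 ≤ perim l := by
  obtain ⟨hne, _, hpos⟩ := h
  obtain ⟨a, t, rfl⟩ := List.exists_cons_of_ne_nil hne
  have := hpos a (List.mem_cons_self)
  simp [perim]; omega

lemma mem_Pf : ∀ n l, l ∈ Pf n ↔ IsPartition l ∧ perim l = n := by
  intro n
  induction n with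
  | zero =>
    intro l
    simp only [Pf, Finset.notMem_empty, false_iff, not_and]
    intro h
    have := perim_pos h
    omega
  | succ n ih =>
    match n, ih with
    | 0, _ =>
      intro l
      simp only [Pf, Finset.mem_singleton]
      constructor
      · rintro rfl
        refine ⟨⟨by simp, by simp, by simp⟩, rfl⟩
      · rintro ⟨⟨hne, hs, hpos⟩, hp⟩
        obtain ⟨a, t, rfl⟩ := List.exists_cons_of_ne_nil hne
        have ha := hpos a (List.mem_cons_self)
        simp [perim] at hp
        have ht : t.length = 0 := by omega
        have : a = 1 := by omega
        simp [List.length_eq_zero_iff] at ht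
        subst ht this; rfl
    | (m+1), ih =>
      intro l
      simp only [Pf, Finset.mem_union, Finset.mem_image]
      constructor
      · rintro (⟨μ, hμ, rfl⟩ | ⟨μ, hμ, rfl⟩)
        · obtain ⟨⟨hne, hs, hpos⟩, hp⟩ := (ih μ).1 hμ
          obtain ⟨a, t, rfl⟩ := List.exists_cons_of_ne_nil hne
          simp only [List.headI, List.tail_cons]
          rw [List.pairwise_cons] at hs
          refine ⟨⟨by simp, ?_, ?_⟩, ?_⟩
          · rw [List.pairwise_cons]
            exact ⟨fun b hb => le_trans (hs.1 b hb) (Nat.le_succ a), hs.2⟩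
          · intro x hx
            rcases List.mem_cons.1 hx with rfl | hx
            · omega
            · exact hpos x (List.mem_cons_of_mem a hx)
          · simp [perim] at hp ⊢; omega
        · obtain ⟨⟨hne, hs, hpos⟩, hp⟩ := (ih μ).1 hμ
          obtain ⟨a, t, rfl⟩ := List.exists_cons_of_ne_nil hne
          simp only [List.headI]
          rw [List.pairwise_cons] at hs
          refine ⟨⟨by simp, ?_, ?_⟩, ?_⟩
          · rw [List.pairwise_cons]
            refine ⟨?_, List.pairwise_cons.2 hs⟩
            intro b hb
            rcases List.mem_cons.1 hb with rfl | hb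
            · exact le_refl _
            · exact hs.1 b hb
          · intro x hx
            rcases List.mem_cons.1 hx with rfl | hx
            · exact hpos _ (List.mem_cons_self)
            · exact hpos x hx
          · simp [perim] at hp ⊢; omega
      · rintro ⟨⟨hne, hs, hpos⟩, hp⟩
        obtain ⟨a, t, rfl⟩ := List.exists_cons_of_ne_nil hne
        have ha := hpos a (List.mem_cons_self)
        rw [List.pairwise_cons] at hs
        match t with
        | [] =>
          left
          refine ⟨[a-1], ?_, ?_⟩
          · rw [ih]
            simp [perim] at hp
            refine ⟨⟨by simp, by simp, ?_⟩, ?_⟩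
            · intro x hx; simp at hx; omega
            · simp [perim]; omega
          · simp [perim] at hp
            simp; omega
        | b :: r =>
          have hb := hpos b (by simp)
          have hab : b ≤ a := hs.1 b (by simp)
          rcases eq_or_lt_of_le hab with rfl | hlt
          · right
            refine ⟨b :: r, ?_, rfl⟩
            rw [ih]
            refine ⟨⟨by simp, hs.2, fun x hx => hpos x (List.mem_cons_of_mem _ hx)⟩, ?_⟩
            simp [perim] at hp ⊢; omega
          · left
            refine ⟨(a-1) :: b :: r, ?_, ?_⟩
            · rw [ih]
              refine ⟨⟨by simp, ?_, ?_⟩, ?_⟩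
              · rw [List.pairwise_cons]
                refine ⟨?_, hs.2⟩
                intro c hc
                have h1 := hs.1 c hc
                rcases List.mem_cons.1 hc with rfl | hc2
                · omega
                · have h2 := (List.pairwise_cons.1 hs.2).1 c hc2
                  omega
              · intro x hx
                rcases List.mem_cons.1 hx with rfl | hx
                · omega
                · exact hpos x (List.mem_cons_of_mem _ hx)
              · simp [perim] at hp ⊢; omega
            · simp; omega

lemma le_headI {l : List ℕ} (hs : l.Pairwise (· ≥ ·)) {b : ℕ} (hb : b ∈ l) : b ≤ l.headI := by
  cases l with
  | nil => simp at hb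
  | cons a t =>
    rcases List.mem_cons.1 hb with rfl | h
    · exact le_refl _
    · exact (List.pairwise_cons.1 hs).1 b h

lemma eq_cons {l : List ℕ} (h : l ≠ []) : l = l.headI :: l.tail := by
  cases l with
  | nil => exact absurd rfl h
  | cons a t => rfl

noncomputable def aseq (d n : ℕ) : Polynomial ℤ :=
  ∑ l ∈ Pf n, (Polynomial.X : Polynomial ℤ) ^ difStat d l

lemma aseq_zero (d : ℕ) : aseq d 0 = 0 := by simp [aseq, Pf]

lemma aseq_one (d : ℕ) : aseq d 1 = 1 := by
  simp [aseq, Pf, difStat]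

/-- second element bound for partitions -/
lemma head_ge_tail_head {l : List ℕ} (hs : l.Pairwise (· ≥ ·)) (h : l.tail ≠ []) :
    l.tail.headI ≤ l.headI := by
  cases l with
  | nil => simp at h
  | cons a t =>
    cases t with
    | nil => simp at h
    | cons b r =>
      exact (List.pairwise_cons.1 hs).1 b (by simp)

lemma aseq_rec (d n : ℕ) (hd : 1 ≤ d) :
    aseq d (n+2) = (1 + Polynomial.X) * aseq d (n+1) + (1 - Polynomial.X) * aseq d (n+1-d) := by
  classical
  set X : Polynomial ℤ := Polynomial.X with hX
  have hPf : Pf (n+2) = ((Pf (n+1)).image fun l => (l.headI + 1) :: l.tail) ∪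
             ((Pf (n+1)).image fun l => l.headI :: l) := rfl
  -- disjointness
  have hdisj : Disjoint ((Pf (n+1)).image fun l => (l.headI + 1) :: l.tail)
      ((Pf (n+1)).image fun l => l.headI :: l) := by
    rw [Finset.disjoint_left]
    rintro x hx1 hx2
    obtain ⟨μ, hμ, rfl⟩ := Finset.mem_image.1 hx1
    obtain ⟨ν, hν, heq⟩ := Finset.mem_image.1 hx2
    obtain ⟨⟨hne, hs, hpos⟩, _⟩ := (mem_Pf _ μ).1 hμ
    obtain ⟨⟨hne', hs', _⟩, _⟩ := (mem_Pf _ ν).1 hν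
    -- heq : ν.headI :: ν = (μ.headI + 1) :: μ.tail
    rw [List.cons_eq_cons] at heq
    obtain ⟨h1, h2⟩ := heq
    -- ν = μ.tail, ν.headI = μ.headI + 1
    have hne2 : μ.tail ≠ [] := h2 ▸ hne'
    have h3 := head_ge_tail_head hs hne2
    rw [← h2] at h3
    omega
  have hinj1 : Set.InjOn (fun l : List ℕ => (l.headI + 1) :: l.tail) ↑(Pf (n+1)) := by
    intro μ hμ ν hν h
    obtain ⟨⟨hne, _, _⟩, _⟩ := (mem_Pf _ μ).1 hμ
    obtain ⟨⟨hne', _, _⟩, _⟩ := (mem_Pf _ ν).1 hν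
    simp only [List.cons_eq_cons] at h
    rw [eq_cons hne, eq_cons hne', h.2]
    congr 1
    omega
  have hinj2 : Set.InjOn (fun l : List ℕ => l.headI :: l) ↑(Pf (n+1)) := by
    intro μ hμ ν hν h
    simpa using (List.cons_eq_cons.1 h).2
  have expand : aseq d (n+2) =
      (∑ l ∈ Pf (n+1), X ^ difStat d ((l.headI + 1) :: l.tail)) +
      (∑ l ∈ Pf (n+1), X ^ difStat d (l.headI :: l)) := by
    rw [aseq, hPf, Finset.sum_union hdisj, Finset.sum_image (fun a ha b hb => hinj1 ha hb),
      Finset.sum_image (fun a ha b hb => hinj2 ha hb)]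
  -- dup part
  have hdup : (∑ l ∈ Pf (n+1), X ^ difStat d (l.headI :: l)) = X * aseq d (n+1) := by
    rw [aseq, Finset.mul_sum]
    refine Finset.sum_congr rfl fun l hl => ?_
    obtain ⟨⟨hne, _, _⟩, _⟩ := (mem_Pf _ l).1 hl
    rw [difStat_cons d _ l hne]
    have : l.headI - l.headI < d := by omega
    rw [if_pos this, pow_add, pow_one, mul_comm]
  -- the q-filter
  set q : List ℕ → Prop := fun l => l.tail ≠ [] ∧ l.headI - l.tail.headI = d - 1 with hq
  have hsplit : (∑ l ∈ Pf (n+1), X ^ difStat d ((l.headI + 1) :: l.tail)) =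
      (∑ l ∈ (Pf (n+1)).filter q, X ^ difStat d ((l.headI + 1) :: l.tail)) +
      (∑ l ∈ (Pf (n+1)).filter (fun l => ¬ q l), X ^ difStat d ((l.headI + 1) :: l.tail)) :=
    (Finset.sum_filter_add_sum_filter_not _ _ _).symm
  -- on q: inc drops the stat
  have honq : ∀ l ∈ (Pf (n+1)).filter q, difStat d ((l.headI + 1) :: l.tail) = difStat d l.tail ∧
      difStat d l = difStat d l.tail + 1 := by
    intro l hl
    obtain ⟨hl, hql⟩ := Finset.mem_filter.1 hl
    obtain ⟨⟨hne, hs, hpos⟩, _⟩ := (mem_Pf _ l).1 hl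
    obtain ⟨ht, hgap⟩ := hql
    have hle := head_ge_tail_head hs ht
    have hpos2 : 0 < l.tail.headI := by
      rw [eq_cons ht]
      exact hpos _ (by rw [eq_cons hne, eq_cons ht]; simp)
    constructor
    · rw [difStat_cons d _ l.tail ht, if_neg (by omega)]
      simp
    · conv_lhs => rw [eq_cons hne]
      rw [difStat_cons d _ l.tail ht, if_pos (by omega)]
      omega
  -- off q: inc preserves the stat
  have hoffq : ∀ l ∈ (Pf (n+1)).filter (fun l => ¬ q l),
      difStat d ((l.headI + 1) :: l.tail) = difStat d l := by
    intro l hl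
    obtain ⟨hl, hql⟩ := Finset.mem_filter.1 hl
    obtain ⟨⟨hne, hs, hpos⟩, _⟩ := (mem_Pf _ l).1 hl
    by_cases ht : l.tail = []
    · rw [eq_cons hne, ht]
      rfl
    · have hle := head_ge_tail_head hs ht
      have hgap : l.headI - l.tail.headI ≠ d - 1 := by
        simp only [hq, not_and] at hql
        exact hql ht
      rw [difStat_cons d _ l.tail ht]
      conv_rhs => rw [eq_cons hne]
      rw [difStat_cons d _ l.tail ht]
      congr 1
      by_cases hc : l.headI - l.tail.headI < d
      · rw [if_pos (by omega), if_pos hc]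
      · rw [if_neg (by omega), if_neg hc]
  -- the bijection: filter q ↔ Pf (n+1-d) via tail
  have hbij : (∑ l ∈ (Pf (n+1)).filter q, X ^ difStat d l.tail) = aseq d (n+1-d) := by
    rw [aseq]
    refine Finset.sum_nbij' (fun l => l.tail) (fun μ => (μ.headI + d - 1) :: μ) ?_ ?_ ?_ ?_ ?_
    · intro l hl
      obtain ⟨hl, ht, hgap⟩ := Finset.mem_filter.1 hl
      obtain ⟨⟨hne, hs, hpos⟩, hp⟩ := (mem_Pf _ l).1 hl
      have hle := head_ge_tail_head hs ht
      rw [mem_Pf]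
      refine ⟨⟨ht, ?_, ?_⟩, ?_⟩
      · rw [eq_cons hne] at hs
        exact (List.pairwise_cons.1 hs).2
      · intro x hx
        exact hpos x (by rw [eq_cons hne]; exact List.mem_cons_of_mem _ hx)
      · have hlen : l.length = l.tail.length + 1 := by
          rw [eq_cons hne]; simp
        have hpos2 : 0 < l.tail.headI := by
          rw [eq_cons ht]
          exact hpos _ (by rw [eq_cons hne, eq_cons ht]; simp)
        simp only [perim] at hp ⊢
        omega
    · intro μ hμ
      obtain ⟨⟨hne, hs, hpos⟩, hp⟩ := (mem_Pf _ μ).1 hμ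
      have hperim1 : 1 ≤ perim μ := by
        have h1 : 0 < μ.headI := hpos _ (by rw [eq_cons hne]; simp)
        have : 1 ≤ μ.length := List.length_pos_iff.2 hne
        simp only [perim]; omega
      have hd1 : d ≤ n := by omega
      rw [Finset.mem_filter, mem_Pf]
      have hμh : 0 < μ.headI := hpos _ (by rw [eq_cons hne]; simp)
      refine ⟨⟨⟨by simp, ?_, ?_⟩, ?_⟩, ?_, ?_⟩
      · rw [List.pairwise_cons]
        refine ⟨?_, hs⟩
        intro b hb
        have := le_headI hs hb
        omega
      · intro x hx
        rcases List.mem_cons.1 hx with rfl | hx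
        · omega
        · exact hpos x hx
      · simp only [perim, List.length_cons, List.headI_cons] at hp ⊢
        have : 1 ≤ μ.length := List.length_pos_iff.2 hne
        omega
      · simpa using hne
      · simp only [List.headI_cons, List.tail_cons]
        omega
    · intro l hl
      obtain ⟨hl, ht, hgap⟩ := Finset.mem_filter.1 hl
      obtain ⟨⟨hne, hs, hpos⟩, _⟩ := (mem_Pf _ l).1 hl
      have hle := head_ge_tail_head hs ht
      have hgap2 : l.headI - l.tail.headI = d - 1 := hgap
      conv_rhs => rw [eq_cons hne]
      show (l.tail.headI + d - 1) :: l.tail = l.headI :: l.tail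
      congr 1
      omega
    · intro μ hμ
      simp
    · intro l hl
      rfl
  -- now the on-q sums
  have honq1 : (∑ l ∈ (Pf (n+1)).filter q, X ^ difStat d ((l.headI + 1) :: l.tail)) =
      aseq d (n+1-d) := by
    rw [← hbij]
    exact Finset.sum_congr rfl fun l hl => by rw [(honq l hl).1]
  have honq2 : (∑ l ∈ (Pf (n+1)).filter q, X ^ difStat d l) = X * aseq d (n+1-d) := by
    rw [← hbij, Finset.mul_sum]
    refine Finset.sum_congr rfl fun l hl => ?_
    rw [(honq l hl).2, pow_add, pow_one, mul_comm]
  have hoffq1 : (∑ l ∈ (Pf (n+1)).filter (fun l => ¬ q l), X ^ difStat d ((l.headI + 1) :: l.tail)) =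
      aseq d (n+1) - X * aseq d (n+1-d) := by
    have : (∑ l ∈ (Pf (n+1)).filter (fun l => ¬ q l), X ^ difStat d l) =
        aseq d (n+1) - (∑ l ∈ (Pf (n+1)).filter q, X ^ difStat d l) := by
      rw [aseq, ← Finset.sum_filter_add_sum_filter_not (Pf (n+1)) q]
      ring
    have hoffq' : (∑ l ∈ (Pf (n+1)).filter (fun l => ¬ q l), X ^ difStat d ((l.headI + 1) :: l.tail)) =
        (∑ l ∈ (Pf (n+1)).filter (fun l => ¬ q l), X ^ difStat d l) :=
      Finset.sum_congr rfl fun l hl => by rw [hoffq l hl]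
    rw [hoffq', this, honq2]
  rw [expand, hsplit, hdup, honq1, hoffq1]
  ring

end Aux

theorem gen_fun_dif (d : ℕ) (hd : 1 ≤ d) :
    letI t : Polynomial ℤ := Polynomial.X
    (PowerSeries.mk fun n =>
        ∑ᶠ l ∈ {l : List ℕ | IsPartition l ∧ perim l = n}, t ^ difStat d l) *
      (1 - PowerSeries.X - PowerSeries.C t * PowerSeries.X * (1 - PowerSeries.X ^ d)
         - PowerSeries.X ^ (d + 1)) = PowerSeries.X := by
  have hmk : (PowerSeries.mk fun n =>
      ∑ᶠ l ∈ {l : List ℕ | IsPartition l ∧ perim l = n}, (Polynomial.X : Polynomial ℤ) ^ difStat d l) =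
      PowerSeries.mk (aseq d) := by
    refine PowerSeries.ext fun n => ?_
    rw [PowerSeries.coeff_mk, PowerSeries.coeff_mk]
    have hset : {l : List ℕ | IsPartition l ∧ perim l = n} = ↑(Pf n) := by
      ext l
      rw [Finset.mem_coe, mem_Pf]
      rfl
    rw [hset, finsum_mem_coe_finset, aseq]
  rw [hmk]
  set A := PowerSeries.mk (aseq d) with hA
  have hB : (1 - PowerSeries.X - PowerSeries.C Polynomial.X * PowerSeries.X *
      (1 - PowerSeries.X ^ d) - PowerSeries.X ^ (d + 1) : PowerSeries (Polynomial ℤ)) =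
      1 - PowerSeries.C (Polynomial.X + 1) * PowerSeries.X ^ 1 +
        PowerSeries.C (Polynomial.X - 1) * PowerSeries.X ^ (d + 1) := by
    simp only [map_add, map_sub, map_one]
    ring
  rw [hB]
  have key : ∀ n : ℕ, aseq d n =
      (if n = 1 then 1 else 0) + ((1 + Polynomial.X) * aseq d (n-1)
        + (1 - Polynomial.X) * aseq d (n-1-d)) := by
    intro n
    match n with
    | 0 =>
      rw [aseq_zero, if_neg (by omega : ¬(0:ℕ) = 1)]
      rw [show (0:ℕ)-1 = 0 from rfl, show (0:ℕ)-1-d = 0 - d from rfl, Nat.zero_sub, aseq_zero]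
      ring
    | 1 =>
      rw [aseq_one, if_pos rfl, show (1:ℕ)-1 = 0 from rfl, Nat.zero_sub, aseq_zero]
      ring
    | (m+2) =>
      rw [aseq_rec d m hd, if_neg (by omega : ¬ m + 2 = 1)]
      exact (zero_add _).symm
  rw [mul_add, mul_sub, mul_one,
    show A * (PowerSeries.C (Polynomial.X + 1) * PowerSeries.X ^ 1) =
      PowerSeries.C (Polynomial.X + 1) * (A * PowerSeries.X ^ 1) from by ring,
    show A * (PowerSeries.C (Polynomial.X - 1) * PowerSeries.X ^ (d+1)) =
      PowerSeries.C (Polynomial.X - 1) * (A * PowerSeries.X ^ (d+1)) from by ring]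
  refine PowerSeries.ext fun n => ?_
  rw [map_add, map_sub, PowerSeries.coeff_C_mul, PowerSeries.coeff_C_mul,
    PowerSeries.coeff_mul_X_pow', PowerSeries.coeff_mul_X_pow', hA,
    PowerSeries.coeff_mk, PowerSeries.coeff_X]
  by_cases h1 : 1 ≤ n
  · rw [if_pos h1]
    by_cases h2 : d + 1 ≤ n
    · rw [if_pos h2, key n, show n - (d+1) = n - 1 - d from by omega,
        PowerSeries.coeff_mk, PowerSeries.coeff_mk]
      ring
    · rw [if_neg h2, key n, show n - 1 - d = 0 from by omega, aseq_zero,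
        PowerSeries.coeff_mk]
      ring
  · obtain rfl : n = 0 := by omega
    rw [if_neg (by omega), if_neg (by omega), if_neg (by omega), key 0,
      show (0:ℕ) - 1 = 0 from rfl, show (0:ℕ) - 1 - d = 0 from by omega, aseq_zero,
      if_neg (by omega : ¬(0:ℕ) = 1)]
    ring
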